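/- Let f : ℝⁿ → ℝ be differentiable with L-Lipschitz gradient, g : ℝⁿ → ℝ proper (possibly nonconvex), γ > 0, v ∈ ℝⁿ, and let x⁺ minimize y ↦ (1/2)‖x − γv − y‖² + γ g(y). Then F(x⁺) − F(x) ≤ ⟨∇f(x) − v, x⁺ − x⟩ + (L/2 − 1/(2γ))‖x⁺ − x‖², where F = f + g. -/

import Mathlib

open scoped RealInnerProductSpace

lemma descent_aux (n : ℕ) (f : EuclideanSpace ℝ (Fin n) → ℝ)
    (f' : EuclideanSpace ℝ (Fin n) → EuclideanSpace ℝ (Fin n))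
    (hf : ∀ z, HasGradientAt f (f' z) z) (L : ℝ) (hL : 0 < L)
    (hlip : ∀ a b : EuclideanSpace ℝ (Fin n), ‖f' a - f' b‖ ≤ L * ‖a - b‖)
    (x y : EuclideanSpace ℝ (Fin n)) :
    f y ≤ f x + ⟪f' x, y - x⟫ + L / 2 * ‖y - x‖ ^ 2 := by
  set d := y - x with hd
  have hcont : Continuous f' := by
    apply LipschitzWith.continuous (K := Real.toNNReal L)
    apply LipschitzWith.of_dist_le_mul
    intro a b
    simpa [dist_eq_norm, Real.coe_toNNReal _ hL.le] using hlip a b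
  have hφ : ∀ t : ℝ, HasDerivAt (fun t : ℝ => f (x + t • d)) ⟪f' (x + t • d), d⟫ t := by
    intro t
    have h1 : HasFDerivAt f ((InnerProductSpace.toDual ℝ _) (f' (x + t • d))) (x + t • d) :=
      (hf _).hasFDerivAt
    have h2 : HasDerivAt (fun t : ℝ => x + t • d) d t := by
      simpa using ((hasDerivAt_id t).smul_const d).const_add x
    have := h1.comp_hasDerivAt t h2
    simp only [InnerProductSpace.toDual_apply_apply] at this
    exact this
  have hcont2 : Continuous (fun t : ℝ => ⟪f' (x + t • d), d⟫) := by
    exact (Continuous.inner (hcont.comp (by continuity)) continuous_const)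
  have hint : f y - f x = ∫ t in (0:ℝ)..1, ⟪f' (x + t • d), d⟫ := by
    have := intervalIntegral.integral_eq_sub_of_hasDerivAt
      (f := fun t : ℝ => f (x + t • d)) (f' := fun t => ⟪f' (x + t • d), d⟫)
      (a := 0) (b := 1) (fun t _ => hφ t) (hcont2.intervalIntegrable 0 1)
    rw [this]
    simp [hd]
  have hmono : ∫ t in (0:ℝ)..1, ⟪f' (x + t • d), d⟫
      ≤ ∫ t in (0:ℝ)..1, (⟪f' x, d⟫ + t * (L * ‖d‖ ^ 2)) := by
    apply intervalIntegral.integral_mono_on (by norm_num)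
      (hcont2.intervalIntegrable 0 1)
      ((by continuity : Continuous fun t : ℝ => ⟪f' x, d⟫ + t * (L * ‖d‖ ^ 2)).intervalIntegrable 0 1)
    intro t ht
    have h1 : ⟪f' (x + t • d) - f' x, d⟫ ≤ ‖f' (x + t • d) - f' x‖ * ‖d‖ :=
      real_inner_le_norm _ _
    have h2 : ‖f' (x + t • d) - f' x‖ ≤ L * (t * ‖d‖) := by
      have := hlip (x + t • d) x
      simpa [norm_smul, abs_of_nonneg ht.1] using this
    have h3 : ‖f' (x + t • d) - f' x‖ * ‖d‖ ≤ L * (t * ‖d‖) * ‖d‖ :=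
      mul_le_mul_of_nonneg_right h2 (norm_nonneg d)
    have h4 : ⟪f' (x + t • d), d⟫ - ⟪f' x, d⟫ = ⟪f' (x + t • d) - f' x, d⟫ := by
      rw [inner_sub_left]
    nlinarith [h1, h3]
  have hval : ∫ t in (0:ℝ)..1, (⟪f' x, d⟫ + t * (L * ‖d‖ ^ 2))
      = ⟪f' x, d⟫ + L / 2 * ‖d‖ ^ 2 := by
    rw [intervalIntegral.integral_add ((continuous_const).intervalIntegrable 0 1) (((by fun_prop : Continuous fun t : ℝ => t * (L * ‖d‖ ^ 2))).intervalIntegrable 0 1)]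
    simp [intervalIntegral.integral_mul_const]
    ring
  linarith [hint ▸ (hval ▸ hmono)]

/-- Descent inequality for the proximal step, nonconvex `g`: if `∇f` is `L`-Lipschitz and
`x⁺` minimizes `y ↦ (1/2)‖x − γv − y‖² + γ g(y)`, then with `F = f + g`,
`F(x⁺) − F(x) ≤ ⟪∇f(x) − v, x⁺ − x⟫ + (L/2 − 1/(2γ))‖x⁺ − x‖²`. -/
theorem stmt_9 (n : ℕ) (f : EuclideanSpace ℝ (Fin n) → ℝ)
    (f' : EuclideanSpace ℝ (Fin n) → EuclideanSpace ℝ (Fin n))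
    (hf : ∀ z, HasGradientAt f (f' z) z) (L : ℝ) (hL : 0 < L)
    (hlip : ∀ a b : EuclideanSpace ℝ (Fin n), ‖f' a - f' b‖ ≤ L * ‖a - b‖)
    (g : EuclideanSpace ℝ (Fin n) → ℝ)
    (γ : ℝ) (hγ : 0 < γ) (x v xp : EuclideanSpace ℝ (Fin n))
    (hprox : ∀ y : EuclideanSpace ℝ (Fin n),
      (1 / 2) * ‖x - γ • v - xp‖ ^ 2 + γ * g xp ≤ (1 / 2) * ‖x - γ • v - y‖ ^ 2 + γ * g y) :
    (f xp + g xp) - (f x + g x) ≤ ⟪f' x - v, xp - x⟫ + (L / 2 - 1 / (2 * γ)) * ‖xp - x‖ ^ 2 := by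
  have hdes := descent_aux n f f' hf L hL hlip x xp
  have hpx := hprox x
  have e1 : x - γ • v - xp = (x - xp) - γ • v := by abel
  have e2 : x - γ • v - x = -(γ • v) := by abel
  have e3 : ‖(x - xp) - γ • v‖ ^ 2
      = ‖x - xp‖ ^ 2 - 2 * ⟪x - xp, γ • v⟫ + ‖γ • v‖ ^ 2 := by
    rw [@norm_sub_sq_real]
  have e4 : ⟪x - xp, γ • v⟫ = γ * ⟪x - xp, v⟫ := real_inner_smul_right _ _ _
  rw [e1, e2, e3, e4, norm_neg] at hpx
  -- hpx : 1/2 * (‖x-xp‖² - 2γ⟪x-xp,v⟫ + ‖γv‖²) + γ g xp ≤ 1/2 ‖γv‖² + γ g x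
  have hg : g xp - g x ≤ ⟪x - xp, v⟫ - 1 / (2 * γ) * ‖x - xp‖ ^ 2 := by
    have key : γ * (g xp - g x) ≤ γ * ⟪x - xp, v⟫ - 1 / 2 * ‖x - xp‖ ^ 2 := by
      nlinarith [hpx]
    have h2 : γ * (1 / (2 * γ)) = 1 / 2 := by field_simp
    nlinarith [key, h2, hγ]
  have e5 : ‖x - xp‖ = ‖xp - x‖ := by rw [norm_sub_rev]
  have e6 : ⟪x - xp, v⟫ = - ⟪v, xp - x⟫ := by
    rw [real_inner_comm]
    rw [show x - xp = -(xp - x) by abel, inner_neg_right]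
  have e7 : ⟪f' x - v, xp - x⟫ = ⟪f' x, xp - x⟫ - ⟪v, xp - x⟫ := by
    rw [inner_sub_left]
  rw [e5, e6] at hg
  rw [e7]
  nlinarith [hg, hdes]
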